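/- Let (u_n)_{n≥1} be a sequence of positive integers tending to infinity with n such that u_n ≡ n (mod 2) for every n ≥ 1, and let k be a positive integer. Then ∑_{n=1}^∞ F_{u_{n+2k} − u_n} / (F_{u_n} · F_{u_{n+2k}}) = ∑_{n=1}^{k} F_{u_{2n} − u_{2n-1}} / (F_{u_{2n}} · F_{u_{2n-1}}). -/

import Mathlib

open Filter Finset Topology

/-- The Fibonacci sequence extended to all integer indices via
`F_{-n} = (-1)^(n+1) F_n`. -/
def fibZ (n : ℤ) : ℤ :=
  if 0 ≤ n then (Nat.fib n.toNat : ℤ) else (-1) ^ (n.natAbs + 1) * (Nat.fib n.natAbs : ℤ)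

private lemma neg_one_pow_add_two_mul (a b : ℕ) : ((-1 : ℝ)) ^ (a + 2 * b) = (-1) ^ a := by
  rw [pow_add, pow_mul, neg_one_sq, one_pow, mul_one]

open Real goldenRatio in
private lemma fib_ratio_tendsto :
    Tendsto (fun n => (Nat.fib (n + 1) : ℝ) / Nat.fib n) atTop (𝓝 φ) := by
  have habs : |ψ| < 1 := abs_lt.2 ⟨neg_one_lt_goldenConj, by linarith [goldenConj_neg]⟩
  have h0 : Tendsto (fun n => ψ ^ n / (Nat.fib n : ℝ)) atTop (𝓝 0) := by
    refine squeeze_zero_norm (fun n => ?_)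
      (tendsto_pow_atTop_nhds_zero_of_lt_one (abs_nonneg ψ) habs)
    rcases Nat.eq_zero_or_pos n with hn | hn
    · subst hn; simp
    · have hfib : (1 : ℝ) ≤ Nat.fib n := by
        exact_mod_cast Nat.one_le_iff_ne_zero.2 (Nat.fib_pos.2 hn).ne'
      have heq : ‖ψ ^ n / (Nat.fib n : ℝ)‖ = |ψ| ^ n / Nat.fib n := by
        rw [norm_div, norm_pow, Real.norm_eq_abs, Real.norm_eq_abs,
          abs_of_pos (by linarith : (0 : ℝ) < Nat.fib n)]
      rw [heq]
      exact div_le_self (by positivity) hfib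
  have hlim : Tendsto (fun n => φ + ψ ^ n / (Nat.fib n : ℝ)) atTop (𝓝 (φ + 0)) :=
    tendsto_const_nhds.add h0
  rw [add_zero] at hlim
  refine Tendsto.congr' ?_ hlim
  filter_upwards [eventually_ge_atTop 1] with n hn
  have hfib : (0 : ℝ) < Nat.fib n := by exact_mod_cast Nat.fib_pos.2 hn
  have key := fib_succ_sub_goldenRatio_mul_fib n
  rw [eq_div_iff hfib.ne', add_mul, div_mul_cancel₀ _ hfib.ne']
  linarith

private lemma fib_key (c b : ℕ) :
    (Nat.fib c : ℤ) * (-1) ^ b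
      = Nat.fib (c + b) * Nat.fib (b + 1) - Nat.fib (c + b + 1) * Nat.fib b := by
  induction b with
  | zero => simp
  | succ b ih =>
    have h1 : (Nat.fib (b + 2) : ℤ) = Nat.fib b + Nat.fib (b + 1) := by
      rw [Nat.fib_add_two]; push_cast; ring
    have h2 : (Nat.fib (c + b + 2) : ℤ) = Nat.fib (c + b) + Nat.fib (c + b + 1) := by
      rw [show c + b + 2 = (c + b) + 2 from rfl, Nat.fib_add_two]; push_cast; ring
    rw [show c + (b + 1) = c + b + 1 from by ring, show c + b + 1 + 1 = c + b + 2 from rfl,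
      show b + 1 + 1 = b + 2 from rfl, h1, h2]
    linear_combination (-1 : ℤ) * ih

private lemma fibZ_sub (a b : ℕ) :
    fibZ ((a : ℤ) - b)
      = (-1) ^ b * ((Nat.fib a : ℤ) * Nat.fib (b + 1) - Nat.fib (a + 1) * Nat.fib b) := by
  rcases le_or_gt b a with h | h
  · have hcast : (a : ℤ) - b = ((a - b : ℕ) : ℤ) := by omega
    rw [hcast, fibZ, if_pos (Int.natCast_nonneg _), Int.toNat_natCast]
    have key := fib_key (a - b) b
    rw [Nat.sub_add_cancel h] at key
    rcases Nat.even_or_odd b with hb | hb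
    · rw [hb.neg_one_pow] at key ⊢; linarith
    · rw [hb.neg_one_pow] at key ⊢; linarith
  · have hneg : ¬ (0 : ℤ) ≤ (a : ℤ) - b := by omega
    have habs : ((a : ℤ) - b).natAbs = b - a := by omega
    rw [fibZ, if_neg hneg, habs]
    have key := fib_key (b - a) a
    rw [Nat.sub_add_cancel h.le] at key
    have hparity : (-1 : ℤ) ^ (b - a + 1) = -((-1) ^ a * (-1) ^ b) := by
      rcases Nat.even_or_odd a with ha' | ha' <;> rcases Nat.even_or_odd b with hb' | hb'
      · have : Odd (b - a + 1) := by
          rw [Nat.odd_iff]; rw [Nat.even_iff] at ha' hb'; omega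
        rw [this.neg_one_pow, ha'.neg_one_pow, hb'.neg_one_pow]; ring
      · have : Even (b - a + 1) := by
          rw [Nat.even_iff]; rw [Nat.even_iff] at ha'; rw [Nat.odd_iff] at hb'; omega
        rw [this.neg_one_pow, ha'.neg_one_pow, hb'.neg_one_pow]; ring
      · have : Even (b - a + 1) := by
          rw [Nat.even_iff]; rw [Nat.odd_iff] at ha'; rw [Nat.even_iff] at hb'; omega
        rw [this.neg_one_pow, ha'.neg_one_pow, hb'.neg_one_pow]; ring
      · have : Odd (b - a + 1) := by
          rw [Nat.odd_iff]; rw [Nat.odd_iff] at ha' hb'; omega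
        rw [this.neg_one_pow, ha'.neg_one_pow, hb'.neg_one_pow]; ring
    rw [hparity]
    rcases Nat.even_or_odd a with ha' | ha' <;> rcases Nat.even_or_odd b with hb' | hb' <;>
      rw [ha'.neg_one_pow] at key ⊢ <;> rw [hb'.neg_one_pow] <;> linarith

private lemma term_eq (a b : ℕ) (ha : 1 ≤ a) (hb : 1 ≤ b) :
    (fibZ ((a : ℤ) - b) : ℝ) / ((Nat.fib b : ℝ) * Nat.fib a)
      = (-1) ^ b * ((Nat.fib (b + 1) : ℝ) / Nat.fib b - (Nat.fib (a + 1) : ℝ) / Nat.fib a) := by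
  have hfa : (0 : ℝ) < Nat.fib a := by exact_mod_cast Nat.fib_pos.2 ha
  have hfb : (0 : ℝ) < Nat.fib b := by exact_mod_cast Nat.fib_pos.2 hb
  rw [fibZ_sub]
  push_cast
  field_simp

private lemma sum_pair (p : ℕ → ℝ) (k : ℕ) :
    ∑ n ∈ Finset.range (2 * k), p n = ∑ i ∈ Finset.range k, (p (2 * i) + p (2 * i + 1)) := by
  induction k with
  | zero => simp
  | succ k ih =>
    rw [show 2 * (k + 1) = 2 * k + 1 + 1 from by ring, Finset.sum_range_succ,
      Finset.sum_range_succ, ih, Finset.sum_range_succ]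
    ring

private lemma telescope (h : ℕ → ℝ) (d : ℕ) (N : ℕ) :
    ∑ n ∈ Finset.range N, (h n - h (n + d))
      = ∑ n ∈ Finset.range d, h n - ∑ n ∈ Finset.range d, h (N + n) := by
  induction N with
  | zero => simp
  | succ N ih =>
    rw [Finset.sum_range_succ, ih]
    have aux : ∑ n ∈ Finset.range d, h (N + 1 + n) + h N
        = ∑ n ∈ Finset.range d, h (N + n) + h (N + d) := by
      have l1 : ∑ i ∈ Finset.range (d + 1), h (N + i)
          = ∑ i ∈ Finset.range d, h (N + (i + 1)) + h (N + 0) := Finset.sum_range_succ' _ _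
      have l2 : ∑ i ∈ Finset.range (d + 1), h (N + i)
          = ∑ i ∈ Finset.range d, h (N + i) + h (N + d) := Finset.sum_range_succ _ _
      simp only [add_zero] at l1
      have e : ∑ n ∈ Finset.range d, h (N + 1 + n) = ∑ n ∈ Finset.range d, h (N + (n + 1)) :=
        Finset.sum_congr rfl fun n _ => by rw [show N + 1 + n = N + (n + 1) from by ring]
      linarith
    linarith

/-- The ratio `F_{u n + 1} / F_{u n}`. -/
private noncomputable def rseq (u : ℕ → ℕ) (n : ℕ) : ℝ := (Nat.fib (u n + 1) : ℝ) / Nat.fib (u n)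

/-- Signed ratio. -/
private noncomputable def gseq (u : ℕ → ℕ) (n : ℕ) : ℝ := (-1 : ℝ) ^ n * rseq u n

/-- Shifted signed ratio. -/
private noncomputable def hseq (u : ℕ → ℕ) (n : ℕ) : ℝ := gseq u (n + 1)

/-- Let `(u_n)_{n≥1}` be a sequence of positive integers tending to
infinity with `u_n ≡ n (mod 2)` for all `n ≥ 1`, and let `k ≥ 1`. Then
`∑_{n=1}^∞ F_{u_{n+2k} - u_n} / (F_{u_n} F_{u_{n+2k}})
= ∑_{n=1}^k F_{u_{2n} - u_{2n-1}} / (F_{u_{2n}} F_{u_{2n-1}})`. -/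
theorem statement11 (u : ℕ → ℕ) (hupos : ∀ n, 1 ≤ n → 1 ≤ u n)
    (hutend : Tendsto u atTop atTop)
    (hparity : ∀ n, 1 ≤ n → u n ≡ n [MOD 2]) (k : ℕ) (hk : 1 ≤ k) :
    Tendsto (fun N => ∑ n ∈ Finset.range N,
        (fibZ ((u (n + 1 + 2 * k) : ℤ) - (u (n + 1) : ℤ)) : ℝ) /
          ((Nat.fib (u (n + 1)) : ℝ) * (Nat.fib (u (n + 1 + 2 * k)) : ℝ)))
      atTop
      (𝓝 (∑ n ∈ Finset.range k,
        (fibZ ((u (2 * n + 2) : ℤ) - (u (2 * n + 1) : ℤ)) : ℝ) /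
          ((Nat.fib (u (2 * n + 2)) : ℝ) * (Nat.fib (u (2 * n + 1)) : ℝ)))) := by
  classical
  have hsign : ∀ n, 1 ≤ n → ((-1 : ℝ) ^ (u n)) = (-1) ^ n := by
    intro n hn
    have hmod := hparity n hn
    rcases Nat.even_or_odd n with h | h
    · have : Even (u n) := by
        rw [Nat.even_iff] at h ⊢; rw [Nat.ModEq] at hmod; omega
      rw [this.neg_one_pow, h.neg_one_pow]
    · have : Odd (u n) := by
        rw [Nat.odd_iff] at h ⊢; rw [Nat.ModEq] at hmod; omega
      rw [this.neg_one_pow, h.neg_one_pow]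
  have hterm : ∀ m n : ℕ, 1 ≤ m → 1 ≤ n →
      (fibZ ((u m : ℤ) - (u n : ℤ)) : ℝ) / ((Nat.fib (u n) : ℝ) * Nat.fib (u m))
        = (-1 : ℝ) ^ n * (rseq u n - rseq u m) := by
    intro m n hm hn
    rw [term_eq (u m) (u n) (hupos m hm) (hupos n hn), hsign n hn]
    rfl
  have hLHSterm : ∀ n : ℕ,
      (fibZ ((u (n + 1 + 2 * k) : ℤ) - (u (n + 1) : ℤ)) : ℝ) /
          ((Nat.fib (u (n + 1)) : ℝ) * (Nat.fib (u (n + 1 + 2 * k)) : ℝ))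
        = hseq u n - hseq u (n + 2 * k) := by
    intro n
    rw [hterm (n + 1 + 2 * k) (n + 1) (by omega) (by omega)]
    unfold hseq gseq
    rw [show n + 2 * k + 1 = (n + 1) + 2 * k from by ring, neg_one_pow_add_two_mul]
    ring
  have hRHSterm : ∀ n : ℕ,
      (fibZ ((u (2 * n + 2) : ℤ) - (u (2 * n + 1) : ℤ)) : ℝ) /
          ((Nat.fib (u (2 * n + 2)) : ℝ) * (Nat.fib (u (2 * n + 1)) : ℝ))
        = hseq u (2 * n) + hseq u (2 * n + 1) := by
    intro n
    rw [mul_comm ((Nat.fib (u (2 * n + 2)) : ℝ)),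
      hterm (2 * n + 2) (2 * n + 1) (by omega) (by omega)]
    unfold hseq gseq
    have hodd : ((-1 : ℝ)) ^ (2 * n + 1) = -1 := Odd.neg_one_pow ⟨n, by ring⟩
    have heven : ((-1 : ℝ)) ^ (2 * n + 1 + 1) = 1 := Even.neg_one_pow ⟨n + 1, by ring⟩
    rw [hodd, heven, show 2 * n + 1 + 1 = 2 * n + 2 from rfl]
    ring
  have hS : ∀ N, ∑ n ∈ Finset.range N,
      (fibZ ((u (n + 1 + 2 * k) : ℤ) - (u (n + 1) : ℤ)) : ℝ) /
          ((Nat.fib (u (n + 1)) : ℝ) * (Nat.fib (u (n + 1 + 2 * k)) : ℝ))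
        = ∑ n ∈ Finset.range (2 * k), hseq u n - ∑ n ∈ Finset.range (2 * k), hseq u (N + n) := by
    intro N
    rw [← telescope (hseq u) (2 * k) N]
    exact Finset.sum_congr rfl fun n _ => hLHSterm n
  have hA : ∑ n ∈ Finset.range (2 * k), hseq u n
      = ∑ n ∈ Finset.range k,
        (fibZ ((u (2 * n + 2) : ℤ) - (u (2 * n + 1) : ℤ)) : ℝ) /
          ((Nat.fib (u (2 * n + 2)) : ℝ) * (Nat.fib (u (2 * n + 1)) : ℝ)) := by
    rw [sum_pair (hseq u) k]
    exact Finset.sum_congr rfl fun n _ => (hRHSterm n).symm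
  have hrlim : ∀ c : ℕ, Tendsto (fun N => rseq u (N + c)) atTop (𝓝 Real.goldenRatio) := by
    intro c
    exact fib_ratio_tendsto.comp (hutend.comp (tendsto_add_atTop_nat c))
  have hT : Tendsto (fun N => ∑ n ∈ Finset.range (2 * k), hseq u (N + n)) atTop (𝓝 0) := by
    have hTeq : ∀ N, ∑ n ∈ Finset.range (2 * k), hseq u (N + n)
        = ∑ i ∈ Finset.range k,
            ((-1 : ℝ)) ^ (N + 1) * (rseq u (N + 2 * i + 1) - rseq u (N + 2 * i + 2)) := by
      intro N
      rw [sum_pair (fun n => hseq u (N + n)) k]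
      refine Finset.sum_congr rfl fun i _ => ?_
      show hseq u (N + 2 * i) + hseq u (N + (2 * i + 1)) = _
      unfold hseq gseq
      have h1 : ((-1 : ℝ)) ^ (N + 2 * i + 1) = (-1) ^ (N + 1) := by
        rw [show N + 2 * i + 1 = (N + 1) + 2 * i from by ring, neg_one_pow_add_two_mul]
      have h2 : ((-1 : ℝ)) ^ (N + (2 * i + 1) + 1) = -((-1) ^ (N + 1)) := by
        rw [show N + (2 * i + 1) + 1 = N + 2 * (i + 1) from by ring, neg_one_pow_add_two_mul,
          pow_succ]
        ring
      rw [h1, h2, show N + (2 * i + 1) + 1 = N + 2 * i + 2 from by ring]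
      ring
    have hbound : Tendsto
        (fun N => ∑ i ∈ Finset.range k, |rseq u (N + 2 * i + 1) - rseq u (N + 2 * i + 2)|)
        atTop (𝓝 0) := by
      have key : Tendsto
          (fun N => ∑ i ∈ Finset.range k, |rseq u (N + 2 * i + 1) - rseq u (N + 2 * i + 2)|)
          atTop (𝓝 (∑ i ∈ Finset.range k, |Real.goldenRatio - Real.goldenRatio|)) := by
        apply tendsto_finset_sum
        intro i _
        have d1 : Tendsto (fun N => rseq u (N + (2 * i + 1))) atTop (𝓝 Real.goldenRatio) := hrlim _
        have d2 : Tendsto (fun N => rseq u (N + (2 * i + 2))) atTop (𝓝 Real.goldenRatio) := hrlim _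
        have := (d1.sub d2).abs
        simpa [show ∀ N, N + (2 * i + 1) = N + 2 * i + 1 from fun N => by ring,
          show ∀ N, N + (2 * i + 2) = N + 2 * i + 2 from fun N => by ring] using this
      simpa using key
    refine squeeze_zero_norm (fun N => ?_) hbound
    rw [hTeq N]
    calc ‖∑ i ∈ Finset.range k,
          ((-1 : ℝ)) ^ (N + 1) * (rseq u (N + 2 * i + 1) - rseq u (N + 2 * i + 2))‖
        ≤ ∑ i ∈ Finset.range k,
          ‖((-1 : ℝ)) ^ (N + 1) * (rseq u (N + 2 * i + 1) - rseq u (N + 2 * i + 2))‖ :=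
          norm_sum_le _ _
      _ = ∑ i ∈ Finset.range k, |rseq u (N + 2 * i + 1) - rseq u (N + 2 * i + 2)| := by
          refine Finset.sum_congr rfl fun i _ => ?_
          rw [norm_mul, norm_pow, norm_neg, norm_one, one_pow, one_mul, Real.norm_eq_abs]
  have hfinal : Tendsto (fun N => ∑ n ∈ Finset.range (2 * k), hseq u n
      - ∑ n ∈ Finset.range (2 * k), hseq u (N + n)) atTop
      (𝓝 (∑ n ∈ Finset.range (2 * k), hseq u n - 0)) := tendsto_const_nhds.sub hT
  rw [sub_zero] at hfinal
  have hconcl := hfinal.congr fun N => (hS N).symm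
  rwa [hA] at hconcl
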